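/- Correctness of the parametric recursion: with H_{k,t}(μ) = min over segmentations m of {1,...,t} into k segments of (∑_{r ∈ m, r ≠ last} c_r + ∑_{i ∈ last segment of m} γ(Y_i)(μ)), one has C_{k,t} = min_{μ ∈ ℝ} H_{k,t}(μ) (assuming the minimum in μ is attained), and H_{k,t+1}(μ) = min(H_{k,t}(μ), C_{k-1,t}) + γ(Y_{t+1})(μ) for t ≥ k. -/

import Mathlib

/-- Optimal cost of segment `[a, b)`: `c_{[a,b)} = min_μ ∑_{i=a}^{b-1} γ(Y_i)(μ)`. -/
noncomputable def segCost {A : Type*} (Y : ℕ → A) (γ : A → ℝ → ℝ) (a b : ℕ) : ℝ :=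
  ⨅ μ : ℝ, ∑ i ∈ Finset.Ico a b, γ (Y i) μ

/-- `C_{k,t}`: optimal `k`-segment cost of `{1,…,t}`. -/
noncomputable def optCost {A : Type*} (Y : ℕ → A) (γ : A → ℝ → ℝ) (k t : ℕ) : ℝ :=
  sInf {x : ℝ | ∃ τ : ℕ → ℕ, τ 0 = 1 ∧ τ k = t + 1 ∧ StrictMonoOn τ (Set.Iic k) ∧
    x = ∑ j ∈ Finset.range k, segCost Y γ (τ j) (τ (j + 1))}

/-- `H_{k,t}(μ)`: minimum over `k`-segment segmentations of `{1,…,t}` of the sum of the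
optimal costs of the first `k-1` segments plus the loss of the last segment at parameter `μ`. -/
noncomputable def paramCost {A : Type*} (Y : ℕ → A) (γ : A → ℝ → ℝ) (k t : ℕ) (μ : ℝ) : ℝ :=
  sInf {x : ℝ | ∃ τ : ℕ → ℕ, τ 0 = 1 ∧ τ k = t + 1 ∧ StrictMonoOn τ (Set.Iic k) ∧
    x = (∑ j ∈ Finset.range (k - 1), segCost Y γ (τ j) (τ (j + 1))) +
      ∑ i ∈ Finset.Ico (τ (k - 1)) (τ k), γ (Y i) μ}


section Aux


lemma aux_finite (F : (ℕ → ℕ) → ℝ) (k T : ℕ)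
    (hF : ∀ σ τ : ℕ → ℕ, (∀ j, j ≤ k → σ j = τ j) → F σ = F τ) :
    {x : ℝ | ∃ τ : ℕ → ℕ, τ 0 = 1 ∧ τ k = T ∧ StrictMonoOn τ (Set.Iic k) ∧ x = F τ}.Finite := by
  apply Set.Finite.subset (Set.finite_range
    (fun v : Fin (k+1) → Fin (T+1) => F (fun j => if h : j < k + 1 then (v ⟨j, h⟩ : ℕ) else 0)))
  rintro x ⟨τ, h0, hk, hmono, rfl⟩
  have hle : ∀ i : ℕ, i ≤ k → τ i ≤ T := by
    intro i hi
    have := hmono.monotoneOn (Set.mem_Iic.2 hi) (Set.mem_Iic.2 le_rfl) hi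
    omega
  refine ⟨fun i => ⟨τ i, Nat.lt_succ_of_le (hle i (Nat.le_of_lt_succ i.isLt))⟩, ?_⟩
  apply hF
  intro j hj
  simp [Nat.lt_succ_of_le hj]

lemma aux_nonempty (F : (ℕ → ℕ) → ℝ) (k T : ℕ) (hk : 1 ≤ k) (hT : k + 1 ≤ T) :
    {x : ℝ | ∃ τ : ℕ → ℕ, τ 0 = 1 ∧ τ k = T ∧ StrictMonoOn τ (Set.Iic k) ∧ x = F τ}.Nonempty := by
  refine ⟨F (fun j => if j = k then T else j + 1), fun j => if j = k then T else j + 1,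
    by show (if 0 = k then T else 0 + 1) = 1; rw [if_neg (by omega : ¬ (0:ℕ) = k)], by simp, ?_, rfl⟩
  intro i hi j hj hij
  simp only [Set.mem_Iic] at hi hj
  by_cases h : j = k <;> by_cases h' : i = k <;> simp [h, h'] <;> omega

variable {A : Type*} (Y : ℕ → A) (γ : A → ℝ → ℝ)

lemma optSet_finite (k t : ℕ) :
    {x : ℝ | ∃ τ : ℕ → ℕ, τ 0 = 1 ∧ τ k = t + 1 ∧ StrictMonoOn τ (Set.Iic k) ∧
      x = ∑ j ∈ Finset.range k, segCost Y γ (τ j) (τ (j + 1))}.Finite := by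
  apply aux_finite _ k (t+1)
  intro σ τ h
  apply Finset.sum_congr rfl
  intro j hj
  simp only [Finset.mem_range] at hj
  rw [h j (by omega), h (j+1) (by omega)]

lemma parSet_finite (k t : ℕ) (μ : ℝ) :
    {x : ℝ | ∃ τ : ℕ → ℕ, τ 0 = 1 ∧ τ k = t + 1 ∧ StrictMonoOn τ (Set.Iic k) ∧
      x = (∑ j ∈ Finset.range (k - 1), segCost Y γ (τ j) (τ (j + 1))) +
        ∑ i ∈ Finset.Ico (τ (k - 1)) (τ k), γ (Y i) μ}.Finite := by
  apply aux_finite _ k (t+1)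
  intro σ τ h
  congr 1
  · apply Finset.sum_congr rfl
    intro j hj
    simp only [Finset.mem_range] at hj
    rw [h j (by omega), h (j+1) (by omega)]
  · rw [h (k-1) (by omega), h k le_rfl]

lemma parSet_nonempty (k t : ℕ) (μ : ℝ) (hk : 1 ≤ k) (ht : k ≤ t) :
    {x : ℝ | ∃ τ : ℕ → ℕ, τ 0 = 1 ∧ τ k = t + 1 ∧ StrictMonoOn τ (Set.Iic k) ∧
      x = (∑ j ∈ Finset.range (k - 1), segCost Y γ (τ j) (τ (j + 1))) +
        ∑ i ∈ Finset.Ico (τ (k - 1)) (τ k), γ (Y i) μ}.Nonempty :=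
  aux_nonempty _ k (t+1) hk (by omega)

lemma optSet_nonempty (k t : ℕ) (hk : 1 ≤ k) (ht : k ≤ t) :
    {x : ℝ | ∃ τ : ℕ → ℕ, τ 0 = 1 ∧ τ k = t + 1 ∧ StrictMonoOn τ (Set.Iic k) ∧
      x = ∑ j ∈ Finset.range k, segCost Y γ (τ j) (τ (j + 1))}.Nonempty :=
  aux_nonempty _ k (t+1) hk (by omega)

lemma segCost_le (hattain : ∀ a b : ℕ, ∃ μ : ℝ, ∀ ν : ℝ,
      ∑ i ∈ Finset.Ico a b, γ (Y i) μ ≤ ∑ i ∈ Finset.Ico a b, γ (Y i) ν)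
    (a b : ℕ) (ν : ℝ) : segCost Y γ a b ≤ ∑ i ∈ Finset.Ico a b, γ (Y i) ν := by
  obtain ⟨μ, hμ⟩ := hattain a b
  exact ciInf_le ⟨_, by rintro x ⟨ν', rfl⟩; exact hμ ν'⟩ ν

lemma segCost_eq (hattain : ∀ a b : ℕ, ∃ μ : ℝ, ∀ ν : ℝ,
      ∑ i ∈ Finset.Ico a b, γ (Y i) μ ≤ ∑ i ∈ Finset.Ico a b, γ (Y i) ν)
    (a b : ℕ) : ∃ μ : ℝ, segCost Y γ a b = ∑ i ∈ Finset.Ico a b, γ (Y i) μ := by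
  obtain ⟨μ, hμ⟩ := hattain a b
  exact ⟨μ, le_antisymm (segCost_le Y γ hattain a b μ) (le_ciInf hμ)⟩

lemma optCost_le (k t : ℕ) (τ : ℕ → ℕ) (h0 : τ 0 = 1) (hk : τ k = t + 1)
    (hm : StrictMonoOn τ (Set.Iic k)) :
    optCost Y γ k t ≤ ∑ j ∈ Finset.range k, segCost Y γ (τ j) (τ (j + 1)) := by
  unfold optCost
  exact csInf_le (optSet_finite Y γ k t).bddBelow ⟨τ, h0, hk, hm, rfl⟩

lemma optCost_attained (k t : ℕ) (hk : 1 ≤ k) (ht : k ≤ t) :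
    ∃ τ : ℕ → ℕ, τ 0 = 1 ∧ τ k = t + 1 ∧ StrictMonoOn τ (Set.Iic k) ∧
      optCost Y γ k t = ∑ j ∈ Finset.range k, segCost Y γ (τ j) (τ (j + 1)) := by
  have h := (optSet_nonempty Y γ k t hk ht).csInf_mem (optSet_finite Y γ k t)
  obtain ⟨τ, h0, hkk, hm, he⟩ := h
  exact ⟨τ, h0, hkk, hm, he⟩

lemma paramCost_le (k t : ℕ) (μ : ℝ) (τ : ℕ → ℕ) (h0 : τ 0 = 1) (hk : τ (k+1) = t + 1)
    (hm : StrictMonoOn τ (Set.Iic (k+1))) :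
    paramCost Y γ (k+1) t μ ≤ (∑ j ∈ Finset.range k, segCost Y γ (τ j) (τ (j + 1))) +
      ∑ i ∈ Finset.Ico (τ k) (τ (k+1)), γ (Y i) μ := by
  unfold paramCost
  exact csInf_le (parSet_finite Y γ (k+1) t μ).bddBelow ⟨τ, h0, hk, hm, by simp⟩

lemma le_paramCost {c : ℝ} (k t : ℕ) (μ : ℝ) (ht : k + 1 ≤ t)
    (h : ∀ τ : ℕ → ℕ, τ 0 = 1 → τ (k+1) = t + 1 → StrictMonoOn τ (Set.Iic (k+1)) →
      c ≤ (∑ j ∈ Finset.range k, segCost Y γ (τ j) (τ (j + 1))) +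
        ∑ i ∈ Finset.Ico (τ k) (τ (k+1)), γ (Y i) μ) :
    c ≤ paramCost Y γ (k+1) t μ := by
  unfold paramCost
  apply le_csInf (parSet_nonempty Y γ (k+1) t μ (by omega) (by omega))
  rintro x ⟨τ, h0, hkk, hm, rfl⟩
  simpa using h τ h0 hkk hm

lemma paramCost_attained (k t : ℕ) (μ : ℝ) (hkt : k + 1 ≤ t) :
    ∃ τ : ℕ → ℕ, τ 0 = 1 ∧ τ (k+1) = t + 1 ∧ StrictMonoOn τ (Set.Iic (k+1)) ∧
      paramCost Y γ (k+1) t μ = (∑ j ∈ Finset.range k, segCost Y γ (τ j) (τ (j + 1))) +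
        ∑ i ∈ Finset.Ico (τ k) (τ (k+1)), γ (Y i) μ := by
  have h := (parSet_nonempty Y γ (k+1) t μ (by omega) (by omega)).csInf_mem
    (parSet_finite Y γ (k+1) t μ)
  obtain ⟨τ, h0, hkk, hm, he⟩ := h
  refine ⟨τ, h0, hkk, hm, ?_⟩
  unfold paramCost
  rw [he]
  simp

lemma update_strictMono {τ : ℕ → ℕ} {m v : ℕ} (hm : StrictMonoOn τ (Set.Iic m))
    (hv : τ m < v) : StrictMonoOn (Function.update τ (m+1) v) (Set.Iic (m+1)) := by
  intro i hi j hj hij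
  simp only [Set.mem_Iic] at hi hj
  by_cases hjm : j = m + 1
  · subst hjm
    rw [Function.update_self, Function.update_of_ne (by omega)]
    have : τ i ≤ τ m := hm.monotoneOn (Set.mem_Iic.2 (by omega)) (Set.mem_Iic.2 le_rfl) (by omega)
    omega
  · rw [Function.update_of_ne (by omega), Function.update_of_ne hjm]
    exact hm (Set.mem_Iic.2 (by omega)) (Set.mem_Iic.2 (by omega)) hij

lemma update_sum (g : ℕ → ℕ → ℝ) (τ : ℕ → ℕ) (m v : ℕ) :
    ∑ j ∈ Finset.range m, g (Function.update τ (m+1) v j) (Function.update τ (m+1) v (j+1)) =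
      ∑ j ∈ Finset.range m, g (τ j) (τ (j+1)) := by
  apply Finset.sum_congr rfl
  intro j hj
  simp only [Finset.mem_range] at hj
  rw [Function.update_of_ne (by omega), Function.update_of_ne (by omega)]

end Aux

theorem parametric_correctness {A : Type*} (Y : ℕ → A) (γ : A → ℝ → ℝ)
    (hattain : ∀ a b : ℕ, ∃ μ : ℝ, ∀ ν : ℝ,
      ∑ i ∈ Finset.Ico a b, γ (Y i) μ ≤ ∑ i ∈ Finset.Ico a b, γ (Y i) ν)
    (k t : ℕ) (hk : 2 ≤ k) (ht : k ≤ t) :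
    optCost Y γ k t = sInf (Set.range fun μ : ℝ => paramCost Y γ k t μ) ∧
    ∀ μ : ℝ, paramCost Y γ k (t + 1) μ =
      min (paramCost Y γ k t μ) (optCost Y γ (k - 1) t) + γ (Y (t + 1)) μ := by
  obtain ⟨m, rfl⟩ : ∃ m, k = m + 1 := ⟨k - 1, by omega⟩
  have hm1 : 1 ≤ m := by omega
  have hmt : m + 1 ≤ t := ht
  -- C_{k,t} ≤ H_{k,t}(μ) for every μ
  have hOleP : ∀ μ : ℝ, optCost Y γ (m+1) t ≤ paramCost Y γ (m+1) t μ := by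
    intro μ
    apply le_paramCost Y γ m t μ hmt
    intro τ h0 hkk hmo
    calc optCost Y γ (m+1) t ≤ ∑ j ∈ Finset.range (m+1), segCost Y γ (τ j) (τ (j+1)) :=
          optCost_le Y γ (m+1) t τ h0 hkk hmo
      _ = (∑ j ∈ Finset.range m, segCost Y γ (τ j) (τ (j+1))) + segCost Y γ (τ m) (τ (m+1)) :=
          Finset.sum_range_succ _ _
      _ ≤ _ := add_le_add_right (segCost_le Y γ hattain _ _ μ) _
  constructor
  · -- Part 1
    apply le_antisymm
    · exact le_csInf ⟨_, ⟨0, rfl⟩⟩ (by rintro x ⟨μ, rfl⟩; exact hOleP μ)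
    · obtain ⟨τ, h0, hkk, hmo, he⟩ := optCost_attained Y γ (m+1) t (by omega) (by omega)
      obtain ⟨μ, hμ⟩ := segCost_eq Y γ hattain (τ m) (τ (m+1))
      have h1 : paramCost Y γ (m+1) t μ ≤ optCost Y γ (m+1) t := by
        rw [he, Finset.sum_range_succ, hμ]
        exact paramCost_le Y γ m t μ τ h0 hkk hmo
      exact le_trans (csInf_le ⟨optCost Y γ (m+1) t, by rintro x ⟨ν, rfl⟩; exact hOleP ν⟩
        ⟨μ, rfl⟩) h1
  · -- Part 2
    intro μ
    simp only [Nat.add_sub_cancel]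
    apply le_antisymm
    · -- ≤ : both branches
      rw [← min_add_add_right]
      apply le_min
      · -- extend the last segment of an optimal segmentation for H_{k,t}(μ)
        obtain ⟨τ, h0, hkk, hmo, he⟩ := paramCost_attained Y γ m t μ hmt
        have hτm : τ m < t + 1 := by
          have := hmo (Set.mem_Iic.2 (by omega : m ≤ m + 1)) (Set.mem_Iic.2 le_rfl) (by omega : m < m + 1)
          omega
        have h3 := paramCost_le Y γ m (t+1) μ (Function.update τ (m+1) (t+2))
          (by rw [Function.update_of_ne (by omega)]; exact h0)
          (Function.update_self _ _ _)
          (update_strictMono (v := t+2) (hmo.mono (Set.Iic_subset_Iic.2 (by omega : m ≤ m + 1))) (by omega))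
        rw [update_sum, Function.update_of_ne (by omega : m ≠ m + 1),
          Function.update_self, Finset.sum_Ico_succ_top (by omega : τ m ≤ t + 1),
          ← add_assoc] at h3
        rw [he, hkk]
        exact h3
      · -- start a new segment at t+1, on top of an optimal (k-1)-segmentation of {1,…,t}
        obtain ⟨σ, h0, hkk, hmo, he⟩ := optCost_attained Y γ m t hm1 (by omega)
        have h3 := paramCost_le Y γ m (t+1) μ (Function.update σ (m+1) (t+2))
          (by rw [Function.update_of_ne (by omega)]; exact h0)
          (Function.update_self _ _ _)
          (update_strictMono (v := t+2) hmo (by omega))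
        rw [update_sum, Function.update_of_ne (by omega : m ≠ m + 1),
          Function.update_self, hkk,
          Finset.sum_Ico_succ_top (by omega : t + 1 ≤ t + 1),
          Finset.Ico_self, Finset.sum_empty, zero_add, ← he] at h3
        exact h3
    · -- ≥ : from a segmentation attaining H_{k,t+1}(μ)
      obtain ⟨τ, h0, hkk, hmo, he⟩ := paramCost_attained Y γ m (t+1) μ (by omega)
      have hτm : τ m < t + 2 := by
        have := hmo (Set.mem_Iic.2 (by omega : m ≤ m + 1)) (Set.mem_Iic.2 le_rfl) (by omega : m < m + 1)
        omega
      have hsplit : ∑ i ∈ Finset.Ico (τ m) (τ (m+1)), γ (Y i) μ =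
          (∑ i ∈ Finset.Ico (τ m) (t+1), γ (Y i) μ) + γ (Y (t+1)) μ := by
        rw [hkk]
        exact Finset.sum_Ico_succ_top (by omega) _
      rw [he, hsplit, ← add_assoc]
      apply add_le_add_left
      by_cases hcase : τ m = t + 1
      · -- the last segment is the singleton {t+1}; compare with C_{k-1,t}
        apply le_trans (min_le_right _ _)
        have h2 : optCost Y γ m t ≤ ∑ j ∈ Finset.range m, segCost Y γ (τ j) (τ (j+1)) :=
          optCost_le Y γ m t τ h0 hcase (hmo.mono (Set.Iic_subset_Iic.2 (by omega : m ≤ m + 1)))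
        rw [hcase]
        simpa using h2
      · -- the last segment contains more; compare with H_{k,t}(μ)
        apply le_trans (min_le_left _ _)
        have h3 := paramCost_le Y γ m t μ (Function.update τ (m+1) (t+1))
          (by rw [Function.update_of_ne (by omega)]; exact h0)
          (Function.update_self _ _ _)
          (update_strictMono (v := t+1) (hmo.mono (Set.Iic_subset_Iic.2 (by omega : m ≤ m + 1))) (by omega))
        rw [update_sum, Function.update_of_ne (by omega : m ≠ m + 1),
          Function.update_self] at h3
        exact h3
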